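/- Let R be a commutative valuation ring with infinite residue field k, (A_i)_{i∈I} a family of R-algebras, B an R-algebra which is torsion-free as an R-module, and f : A = ∏_{i∈I} A_i → B a surjective R-algebra homomorphism. Let rk_R(B) denote the rank of B as an R-module (the common cardinality of all maximal R-linearly independent subsets of B). If either (i) rk_R(B) < card(k), or (ii) rk_R(B) < 2^{ℵ0}, then the composite homomorphism A → B → B/Z(B) factors as A → A/U_0 × … × A/U_{n-1} → B/Z(B), where U_0, …, U_{n-1} are ultrafilters on I which are card(k)^+-complete in case (i) and countably complete in case (ii). -/

import Mathlib

universe u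
set_option linter.unusedSectionVars false

/-- The setoid on a dependent product given by a filter. -/
def redSetoid {I : Type u} (F : Filter I) (A : I → Type u) : Setoid (∀ i, A i) where
  r a b := {i | a i = b i} ∈ F
  iseqv := by
    refine ⟨fun a => ?_, fun {a b} h => ?_, fun {a b c} h₁ h₂ => ?_⟩
    · simp
    · simpa [eq_comm] using h
    · exact Filter.mem_of_superset (Filter.inter_mem h₁ h₂)
        (fun i hi => hi.1.trans hi.2)

/-- The reduced product of a family of sets with respect to a filter. -/
def ReducedProduct {I : Type u} (F : Filter I) (A : I → Type u) : Type u :=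
  Quotient (redSetoid F A)

/-- The canonical quotient map onto a reduced product. -/
def reducedMk {I : Type u} (F : Filter I) (A : I → Type u) (a : ∀ i, A i) :
    ReducedProduct F A :=
  Quotient.mk (redSetoid F A) a

/-- A filter is `κ`-complete if it is closed under intersections of
families of fewer than `κ` of its members. -/
def KappaComplete {I : Type u} (κ : Cardinal.{u}) (F : Filter I) : Prop :=
  ∀ 𝒮 : Set (Set I), Cardinal.mk 𝒮 < κ → (∀ s ∈ 𝒮, s ∈ F) → ⋂₀ 𝒮 ∈ F

/-- A filter is countably complete if it is closed under countable
intersections of its members. -/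
def CountablyComplete {I : Type u} (F : Filter I) : Prop :=
  ∀ s : ℕ → Set I, (∀ n, s n ∈ F) → (⋂ n, s n) ∈ F


/-- The total annihilator ideal `Z(B) = {x | xB = Bx = 0}` of a (nonunital,
nonassociative) `R`-algebra, as an `R`-submodule. -/
def totalAnnihilator (R : Type u) (B : Type u) [CommRing R]
    [NonUnitalNonAssocRing B] [Module R B] [SMulCommClass R B B]
    [IsScalarTower R B B] : Submodule R B where
  carrier := {x | ∀ y : B, x * y = 0 ∧ y * x = 0}
  zero_mem' := fun y => ⟨zero_mul y, mul_zero y⟩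
  add_mem' := by
    intro a b ha hb y
    exact ⟨by rw [add_mul, (ha y).1, (hb y).1, add_zero],
           by rw [mul_add, (ha y).2, (hb y).2, add_zero]⟩
  smul_mem' := by
    intro c x hx y
    exact ⟨by rw [smul_mul_assoc, (hx y).1, smul_zero],
           by rw [mul_smul_comm, (hx y).2, smul_zero]⟩

open Function Set Cardinal

section BN

variable {R : Type u} [CommRing R] [IsDomain R] [ValuationRing R]
    {I : Type u} {A : I → Type u}
    [∀ i, NonUnitalNonAssocRing (A i)] [∀ i, Module R (A i)]
    [∀ i, SMulCommClass R (A i) (A i)] [∀ i, IsScalarTower R (A i) (A i)]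
    {B : Type u} [NonUnitalNonAssocRing B] [Module R B] [SMulCommClass R B B]
    [IsScalarTower R B B] [NoZeroSMulDivisors R B]

lemma mem_tA {z : B} : z ∈ totalAnnihilator R B ↔ ∀ y : B, z * y = 0 ∧ y * z = 0 :=
  Iff.rfl

lemma tA_sat {c : R} (hc : c ≠ 0) {z : B} (h : c • z ∈ totalAnnihilator R B) :
    z ∈ totalAnnihilator R B := by
  intro y
  have h1 := (h y).1
  have h2 := (h y).2
  rw [smul_mul_assoc] at h1
  rw [mul_smul_comm] at h2
  exact ⟨(smul_eq_zero.mp h1).resolve_left hc, (smul_eq_zero.mp h2).resolve_left hc⟩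

variable (f : (∀ i, A i) →ₙₐ[R] B)

/-- The ideal of "null" index sets. -/
def JSet : Set (Set I) :=
  {S | ∀ a : ∀ i, A i, (∀ i ∉ S, a i = 0) → f a ∈ totalAnnihilator R B}

lemma JSet_mono {S T : Set I} (hST : S ⊆ T) (hT : T ∈ JSet f) : S ∈ JSet f := by
  intro a ha
  exact hT a fun i hi => ha i fun h => hi (hST h)

lemma JSet_empty : (∅ : Set I) ∈ JSet f := by
  intro a ha
  have : a = 0 := funext fun i => ha i (notMem_empty i)
  rw [this, map_zero]
  exact Submodule.zero_mem _

lemma JSet_union {S T : Set I} (hS : S ∈ JSet f) (hT : T ∈ JSet f) :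
    S ∪ T ∈ JSet f := by
  classical
  intro a ha
  have h1 : a = (fun i => if i ∈ S then a i else 0) +
      (fun i => if i ∈ S then 0 else a i) := by
    funext i
    by_cases h : i ∈ S <;> simp [h]
  rw [h1, map_add]
  refine Submodule.add_mem _ (hS _ fun i hi => if_neg hi) (hT _ fun i hi => ?_)
  by_cases h : i ∈ S
  · exact if_pos h
  · rw [if_neg h]
    exact ha i (by simp [h, hi])

lemma JSet_finsetUnion {γ : Type*} (s : Finset γ) (W : γ → Set I)
    (h : ∀ β ∈ s, W β ∈ JSet f) : (⋃ β ∈ s, W β) ∈ JSet f := by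
  classical
  induction s using Finset.induction_on with
  | empty => simpa using JSet_empty f
  | @insert a s ha ih =>
      rw [Finset.set_biUnion_insert]
      exact JSet_union f (h _ (Finset.mem_insert_self _ _))
        (ih fun β hβ => h β (Finset.mem_insert_of_mem hβ))


section Framework
open scoped Classical

variable {Λ : Type u} (W : Λ → Set I) (x : ∀ i, A i)

/-- Scale a vector coordinatewise according to the block structure `W`. -/
noncomputable def sFun (e : Λ → R) (c : ∀ i, A i) : ∀ i, A i := fun i =>
  if hc : ∃ β, i ∈ W β then e hc.choose • c i else 0

lemma block_unique (hd : Pairwise (onFun Disjoint W)) {i : I} {β γ : Λ}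
    (hβ : i ∈ W β) (hγ : i ∈ W γ) : β = γ := by
  by_contra h
  exact (hd h).le_bot ⟨hβ, hγ⟩ |>.elim

lemma sFun_spec (hd : Pairwise (onFun Disjoint W)) (e : Λ → R) (c : ∀ i, A i) {i : I} {β : Λ} (hi : i ∈ W β) :
    sFun W e c i = e β • c i := by
  have hc : ∃ β, i ∈ W β := ⟨β, hi⟩
  rw [sFun, dif_pos hc, block_unique W hd hc.choose_spec hi]

lemma sFun_not (e : Λ → R) (c : ∀ i, A i) {i : I} (hi : ¬∃ β, i ∈ W β) :
    sFun W e c i = 0 := dif_neg hi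

/-- `f ∘ u` as a linear map `R^Λ → B`. -/
noncomputable def FL : (Λ → R) →ₗ[R] B where
  toFun h := f (sFun W h x)
  map_add' h h' := by
    have heq : sFun W (h + h') x = sFun W h x + sFun W h' x := by
      funext i
      by_cases hc : ∃ β, i ∈ W β
      · simp only [sFun, dif_pos hc, Pi.add_apply, add_smul]
      · simp only [sFun, dif_neg hc, Pi.add_apply, add_zero]
    show f _ = f _ + f _
    rw [heq, map_add]
  map_smul' c h := by
    have heq : sFun W (c • h) x = c • sFun W h x := by
      funext i
      by_cases hc : ∃ β, i ∈ W β
      · simp only [sFun, dif_pos hc, Pi.smul_apply, smul_smul, smul_eq_mul]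
      · simp only [sFun, dif_neg hc, Pi.smul_apply, smul_zero]
    show f _ = c • f _
    rw [heq, map_smul]

lemma FL_apply (h : Λ → R) : FL f W x h = f (sFun W h x) := rfl

/-- The submodule of scaling vectors killed by `f` modulo the annihilator. -/
noncomputable def ZSub : Submodule R (Λ → R) :=
  Submodule.comap (FL f W x) (totalAnnihilator R B)

lemma mem_ZSub {h : Λ → R} : h ∈ ZSub f W x ↔ f (sFun W h x) ∈ totalAnnihilator R B :=
  Iff.rfl

lemma sFun_mul_right (hd : Pairwise (onFun Disjoint W)) (e h : Λ → R) (c : ∀ i, A i) :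
    sFun W (e * h) x * c = sFun W h x * sFun W e c := by
  funext i
  by_cases hc : ∃ β, i ∈ W β
  · obtain ⟨β, hβ⟩ := hc
    rw [Pi.mul_apply, Pi.mul_apply, sFun_spec W hd _ _ hβ, sFun_spec W hd _ _ hβ,
      sFun_spec W hd _ _ hβ]
    simp only [Pi.mul_apply, smul_mul_assoc, mul_smul_comm, smul_smul, mul_comm]
  · rw [Pi.mul_apply, Pi.mul_apply, sFun_not W _ _ hc, sFun_not W _ _ hc, zero_mul, zero_mul]

lemma sFun_mul_left (hd : Pairwise (onFun Disjoint W)) (e h : Λ → R) (c : ∀ i, A i) :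
    c * sFun W (e * h) x = sFun W e c * sFun W h x := by
  funext i
  by_cases hc : ∃ β, i ∈ W β
  · obtain ⟨β, hβ⟩ := hc
    rw [Pi.mul_apply, Pi.mul_apply, sFun_spec W hd _ _ hβ, sFun_spec W hd _ _ hβ,
      sFun_spec W hd _ _ hβ]
    simp only [Pi.mul_apply, smul_mul_assoc, mul_smul_comm, smul_smul, mul_comm]
  · rw [Pi.mul_apply, Pi.mul_apply, sFun_not W _ _ hc, sFun_not W _ _ hc, mul_zero, zero_mul]

lemma ZSub_mul (hd : Pairwise (onFun Disjoint W)) (hsurj : Function.Surjective f) {h : Λ → R} (hh : h ∈ ZSub f W x)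
    (e : Λ → R) : e * h ∈ ZSub f W x := by
  rw [mem_ZSub]
  intro y
  obtain ⟨c, rfl⟩ := hsurj y
  constructor
  · rw [← map_mul, sFun_mul_right W x hd, map_mul]
    exact (hh (f (sFun W e c))).1
  · rw [← map_mul, sFun_mul_left W x hd, map_mul]
    exact (hh (f (sFun W e c))).2

lemma ZSub_sat {c : R} (hc : c ≠ 0) {h : Λ → R} (hh : c • h ∈ ZSub f W x) :
    h ∈ ZSub f W x := by
  rw [mem_ZSub] at hh ⊢
  rw [← FL_apply, map_smul] at hh
  exact tA_sat hc hh


/-- Reduction to the residue field, coordinatewise. -/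
noncomputable def rFun (h : Λ → R) : Λ → IsLocalRing.ResidueField R :=
  fun β => IsLocalRing.residue R (h β)

/-- The image of `ZSub` in the residue field world. -/
def WSet : Set (Λ → IsLocalRing.ResidueField R) :=
  rFun '' (ZSub f W x : Set (Λ → R))

lemma WSet_add {hb hb' : Λ → IsLocalRing.ResidueField R} (hh : hb ∈ WSet f W x)
    (hh' : hb' ∈ WSet f W x) : hb + hb' ∈ WSet f W x := by
  obtain ⟨h, hZ, rfl⟩ := hh
  obtain ⟨h', hZ', rfl⟩ := hh'
  exact ⟨h + h', (ZSub f W x).add_mem hZ hZ', by funext β; simp [rFun]⟩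

lemma WSet_zero_mem : (0 : Λ → IsLocalRing.ResidueField R) ∈ WSet f W x :=
  ⟨0, (ZSub f W x).zero_mem, by funext β; simp [rFun]⟩

lemma WSet_mul (hd : Pairwise (onFun Disjoint W)) (hsurj : Function.Surjective f)
    {hb : Λ → IsLocalRing.ResidueField R} (hh : hb ∈ WSet f W x)
    (eb : Λ → IsLocalRing.ResidueField R) : eb * hb ∈ WSet f W x := by
  obtain ⟨h, hZ, rfl⟩ := hh
  choose e he using fun β => IsLocalRing.residue_surjective (R := R) (eb β)
  exact ⟨e * h, ZSub_mul f W x hd hsurj hZ e, by funext β; simp [rFun, he]⟩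

lemma WSet_smul (hd : Pairwise (onFun Disjoint W)) (hsurj : Function.Surjective f)
    {hb : Λ → IsLocalRing.ResidueField R} (hh : hb ∈ WSet f W x)
    (cb : IsLocalRing.ResidueField R) : cb • hb ∈ WSet f W x := by
  have : cb • hb = (fun _ => cb) * hb := by funext β; simp
  rw [this]
  exact WSet_mul f W x hd hsurj hh _

lemma WSet_fin (hd : Pairwise (onFun Disjoint W)) (hWJ : ∀ β, W β ∈ JSet f)
    {hb : Λ → IsLocalRing.ResidueField R} (hfin : {β | hb β ≠ 0}.Finite) :
    hb ∈ WSet f W x := by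
  classical
  refine ⟨fun β => if h0 : hb β = 0 then 0 else
    (IsLocalRing.residue_surjective (R := R) (hb β)).choose, ?_, ?_⟩
  · show f (sFun W _ x) ∈ totalAnnihilator R B
    have hJ : (⋃ β ∈ hfin.toFinset, W β) ∈ JSet f :=
      JSet_finsetUnion f _ W (fun β _ => hWJ β)
    refine hJ _ fun i hi => ?_
    by_cases hc : ∃ β, i ∈ W β
    · obtain ⟨β, hβ⟩ := hc
      rw [sFun_spec W hd _ _ hβ]
      have h0 : hb β = 0 := by
        by_contra h0
        exact hi (Set.mem_biUnion (hfin.mem_toFinset.mpr h0) hβ)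
      rw [dif_pos h0, zero_smul]
    · exact sFun_not W _ _ hc
  · funext β
    by_cases h0 : hb β = 0
    · simp [rFun, h0]
    · simp only [rFun, dif_neg h0]
      exact (IsLocalRing.residue_surjective (hb β)).choose_spec

lemma res_unit {r : R} (hr : IsLocalRing.residue R r ≠ 0) : IsUnit r := by
  rw [← IsLocalRing.notMem_maximalIdeal]
  intro hm
  exact hr (Ideal.Quotient.eq_zero_iff_mem.mpr hm)

lemma WSet_one_not (hd : Pairwise (onFun Disjoint W)) (hsurj : Function.Surjective f)
    (hx : ∀ i, (¬∃ β, i ∈ W β) → x i = 0) (hfx : f x ∉ totalAnnihilator R B) :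
    (fun _ => (1 : IsLocalRing.ResidueField R)) ∉ WSet f W x := by
  rintro ⟨h, hZ, hr⟩
  have hu : ∀ β, IsUnit (h β) := fun β =>
    res_unit (by rw [show IsLocalRing.residue R (h β) = 1 from congrFun hr β]; exact one_ne_zero)
  have he : (fun β => (↑(hu β).unit⁻¹ : R)) * h = fun _ => (1:R) := by
    funext β
    simp only [Pi.mul_apply]
    exact (hu β).val_inv_mul
  have h1 : (fun _ => (1:R)) ∈ ZSub f W x := by
    rw [← he]; exact ZSub_mul f W x hd hsurj hZ _
  have hx1 : sFun W (fun _ => (1:R)) x = x := by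
    funext i
    by_cases hc : ∃ β, i ∈ W β
    · obtain ⟨β, hβ⟩ := hc; rw [sFun_spec W hd _ _ hβ, one_smul]
    · rw [sFun_not W _ _ hc, hx i hc]
  exact hfx (by rw [← hx1]; exact h1)

lemma WSet_cof (hd : Pairwise (onFun Disjoint W)) (hsurj : Function.Surjective f)
    (hWJ : ∀ β, W β ∈ JSet f) (hx : ∀ i, (¬∃ β, i ∈ W β) → x i = 0)
    (hfx : f x ∉ totalAnnihilator R B) :
    ∀ hb ∈ WSet f W x, {β | hb β = 0}.Finite → False := by
  classical
  intro hb hmem hfin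
  have hind : (fun β => (hb β)⁻¹) * hb ∈ WSet f W x := WSet_mul f W x hd hsurj hmem _
  have hz : (fun β => if hb β = 0 then (1 : IsLocalRing.ResidueField R) else 0) ∈ WSet f W x := by
    refine WSet_fin f W x hd hWJ (hfin.subset ?_)
    intro β hβ
    simp only [Set.mem_setOf_eq] at hβ ⊢
    by_contra h0
    simp [h0] at hβ
  have hsum := WSet_add f W x hind hz
  have : ((fun β => (hb β)⁻¹) * hb) + (fun β => if hb β = 0 then (1 : IsLocalRing.ResidueField R) else 0)
      = fun _ => 1 := by
    funext β
    by_cases h0 : hb β = 0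
    · simp [h0]
    · simp [h0, inv_mul_cancel₀ h0]
  rw [this] at hsum
  exact WSet_one_not f W x hd hsurj hx hfx hsum

lemma WSet_eq_zero (hd : Pairwise (onFun Disjoint W)) (hsurj : Function.Surjective f)
    (hδ : ∀ β : Λ, ∀ d : Λ → R, (∀ γ, γ ≠ β → d γ = 0) → IsUnit (d β) →
      d ∉ ZSub f W x) :
    ∀ hb ∈ WSet f W x, hb = 0 := by
  classical
  rintro hb ⟨h, hZ, rfl⟩
  funext β0
  by_contra hne
  have hu : IsUnit (h β0) := res_unit hne
  refine hδ β0 ((fun γ => if γ = β0 then (↑hu.unit⁻¹ : R) else 0) * h)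
    (fun γ hγ => by simp [hγ]) ?_ (ZSub_mul f W x hd hsurj hZ _)
  simp only [Pi.mul_apply, if_pos rfl]
  exact (hu.unit⁻¹).isUnit.mul hu

lemma WSet_cof0 (hd : Pairwise (onFun Disjoint W)) (hsurj : Function.Surjective f)
    [Infinite Λ]
    (hδ : ∀ β : Λ, ∀ d : Λ → R, (∀ γ, γ ≠ β → d γ = 0) → IsUnit (d β) →
      d ∉ ZSub f W x) :
    ∀ hb ∈ WSet f W x, {β | hb β = 0}.Finite → False := by
  intro hb hmem hfin
  rw [WSet_eq_zero f W x hd hsurj hδ hb hmem] at hfin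
  have huniv : {β : Λ | (0 : Λ → IsLocalRing.ResidueField R) β = 0} = Set.univ := by
    ext β; simp
  rw [huniv] at hfin
  exact Set.infinite_univ hfin

end Framework

section Cauchy
open Polynomial

lemma cauchy_cofinite {K : Type u} [Field K] {Λ' κ : Type u} (a : Λ' → K)
    (ha : Function.Injective a) (b : κ → K) (hb : Function.Injective b)
    (hab : ∀ t α, b t ≠ a α) (F : Finset κ) (c : κ → K) (t0 : κ) (ht0 : t0 ∈ F)
    (hc : c t0 ≠ 0) :
    {α | ∑ t ∈ F, c t * (b t - a α)⁻¹ = 0}.Finite := by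
  classical
  set q : K[X] := ∑ t ∈ F, Polynomial.C (c t) * ∏ t' ∈ F.erase t,
    (Polynomial.C (b t') - Polynomial.X) with hqdef
  have hqb : q.eval (b t0) = c t0 * ∏ t' ∈ F.erase t0, (b t' - b t0) := by
    rw [hqdef, eval_finset_sum]
    rw [Finset.sum_eq_single_of_mem t0 ht0]
    · simp [eval_prod]
    · intro t ht hne
      simp only [eval_mul, eval_C, eval_prod, eval_sub, eval_X]
      rw [Finset.prod_eq_zero (Finset.mem_erase.mpr ⟨Ne.symm hne, ht0⟩) (sub_self (b t0)), mul_zero]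
  have hq0 : q ≠ 0 := by
    intro h
    rw [h, eval_zero] at hqb
    have hprod : ∏ t' ∈ F.erase t0, (b t' - b t0) ≠ 0 :=
      Finset.prod_ne_zero_iff.mpr fun t' ht' =>
        sub_ne_zero.mpr fun he => (Finset.mem_erase.mp ht').1 (hb he)
    exact hprod (by
      rcases mul_eq_zero.mp hqb.symm with h' | h'
      · exact absurd h' hc
      · exact h')
  have key : {α | ∑ t ∈ F, c t * (b t - a α)⁻¹ = 0} ⊆ a ⁻¹' {z | q.IsRoot z} := by
    intro α hs
    simp only [Set.mem_setOf_eq] at hs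
    have hne : ∀ t ∈ F, b t - a α ≠ 0 := fun t _ => sub_ne_zero.mpr (hab t α)
    have heval : q.eval (a α) = (∏ t ∈ F, (b t - a α)) * ∑ t ∈ F, c t * (b t - a α)⁻¹ := by
      rw [hqdef, eval_finset_sum, Finset.mul_sum]
      refine Finset.sum_congr rfl fun t ht => ?_
      simp only [eval_mul, eval_C, eval_prod, eval_sub, eval_X]
      rw [← Finset.prod_erase_mul F _ ht]
      have h1 : (b t - a α) * (c t * (b t - a α)⁻¹) = c t := by
        field_simp
        exact mul_div_cancel_left₀ _ (hne t ht)
      rw [mul_assoc, h1, mul_comm]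
    show q.IsRoot (a α)
    rw [IsRoot, heval, hs, mul_zero]
  exact ((q.finite_setOf_isRoot hq0).preimage ha.injOn).subset key

end Cauchy

lemma exists_dvd_min {R : Type u} [CommRing R] [IsDomain R] [ValuationRing R]
    {ι : Type u} (s : Finset ι) (g : ι → R) (hex : ∃ t ∈ s, g t ≠ 0) :
    ∃ t1 ∈ s, g t1 ≠ 0 ∧ ∀ t ∈ s, g t1 ∣ g t := by
  classical
  induction s using Finset.induction_on with
  | empty => simpa using hex
  | @insert a s ha ih =>
    by_cases hs : ∃ t ∈ s, g t ≠ 0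
    · obtain ⟨t1, ht1, hne, hdvd⟩ := ih hs
      rcases ValuationRing.dvd_total (g t1) (g a) with h | h
      · exact ⟨t1, Finset.mem_insert_of_mem ht1, hne, fun t ht =>
          (Finset.mem_insert.mp ht).elim (fun e => e ▸ h) (hdvd t)⟩
      · refine ⟨a, Finset.mem_insert_self _ _, fun h0 => hne ?_, fun t ht => ?_⟩
        · obtain ⟨u, hu⟩ := h
          rw [hu, h0, zero_mul]
        · rcases Finset.mem_insert.mp ht with e | hts
          · subst e; exact dvd_rfl
          · exact dvd_trans h (hdvd t hts)
    · push_neg at hs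
      obtain ⟨t, ht, hne⟩ := hex
      have hta : t = a := by
        rcases Finset.mem_insert.mp ht with e | h'
        · exact e
        · exact absurd (hs t h') hne
      refine ⟨a, Finset.mem_insert_self _ _, hta ▸ hne, fun t' ht' => ?_⟩
      rcases Finset.mem_insert.mp ht' with e | h'
      · subst e; exact dvd_rfl
      · rw [hs t' h']
        exact dvd_zero _

section Core
open scoped Classical

variable (f : (∀ i, A i) →ₙₐ[R] B) {Λ : Type u} (W : Λ → Set I) (x : ∀ i, A i)

lemma core_indep (hd : Pairwise (onFun Disjoint W))
    {ι : Type u} (w : ι → Λ → IsLocalRing.ResidueField R)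
    (hw : ∀ (F : Finset ι) (c : ι → IsLocalRing.ResidueField R) (t1 : ι), t1 ∈ F →
      c t1 ≠ 0 → (fun α => ∑ t ∈ F, c t * w t α) ∉ WSet f W x)
    (v : ι → Λ → R) (hv : ∀ t, rFun (v t) = w t) :
    LinearIndependent R (fun t => FL f W x (v t)) := by
  rw [linearIndependent_iff']
  intro s g hsum t ht
  by_contra hgt
  obtain ⟨t1, ht1, hne1, hdvd⟩ := exists_dvd_min s g ⟨t, ht, hgt⟩
  set d : ι → R := fun t' => if t' = t1 then 1 else
    if hmem : t' ∈ s then (hdvd t' hmem).choose else 0 with hddef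
  have hgd : ∀ t' ∈ s, g t' = g t1 * d t' := by
    intro t' hmem
    by_cases he : t' = t1
    · subst he; rw [hddef]; simp
    · rw [hddef]; simp only [he, if_false, dif_pos hmem]
      exact (hdvd t' hmem).choose_spec
  set h' : Λ → R := ∑ t' ∈ s, d t' • v t' with hh'def
  have hstar : g t1 • h' = ∑ t' ∈ s, g t' • v t' := by
    rw [hh'def, Finset.smul_sum]
    refine Finset.sum_congr rfl fun t' hmem => ?_
    rw [smul_smul, ← hgd t' hmem]
  have hZ0 : g t1 • h' ∈ ZSub f W x := by
    have : FL f W x (g t1 • h') = 0 := by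
      rw [hstar, map_sum]
      simp_rw [map_smul]
      exact hsum
    show FL f W x (g t1 • h') ∈ totalAnnihilator R B
    rw [this]
    exact (totalAnnihilator R B).zero_mem
  have hZ : h' ∈ ZSub f W x := ZSub_sat f W x hne1 hZ0
  have hWmem : rFun h' ∈ WSet f W x := ⟨h', hZ, rfl⟩
  have hred : rFun h' = fun α => ∑ t' ∈ s,
      IsLocalRing.residue R (d t') * w t' α := by
    funext α
    have : h' α = ∑ t' ∈ s, d t' * v t' α := by
      rw [hh'def, Finset.sum_apply]
      exact Finset.sum_congr rfl fun t' _ => rfl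
    rw [rFun, this, map_sum]
    refine Finset.sum_congr rfl fun t' _ => ?_
    rw [map_mul]
    congr 1
    exact congrFun (hv t') α
  rw [hred] at hWmem
  refine hw s (fun t' => IsLocalRing.residue R (d t')) t1 ht1 ?_ hWmem
  rw [hddef]
  simp

lemma rank_ge_cauchy (hd : Pairwise (onFun Disjoint W)) {κ : Type u}
    (a : Λ ↪ IsLocalRing.ResidueField R) (b : κ ↪ IsLocalRing.ResidueField R)
    (hab : ∀ t α, b t ≠ a α)
    (hcof : ∀ hb ∈ WSet f W x, {β | hb β = 0}.Finite → False) :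
    #κ ≤ Module.rank R B := by
  set w : κ → Λ → IsLocalRing.ResidueField R := fun t α => (b t - a α)⁻¹ with hwdef
  have hw : ∀ (F : Finset κ) (c : κ → IsLocalRing.ResidueField R) (t1 : κ), t1 ∈ F →
      c t1 ≠ 0 → (fun α => ∑ t ∈ F, c t * w t α) ∉ WSet f W x := by
    intro F c t1 ht1 hc hmem
    exact hcof _ hmem
      (cauchy_cofinite a a.injective b b.injective hab F c t1 ht1 hc)
  set v : κ → Λ → R :=
    fun t α => (IsLocalRing.residue_surjective (R := R) (w t α)).choose with hvdef
  have hv : ∀ t, rFun (v t) = w t := fun t => funext fun α =>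
    (IsLocalRing.residue_surjective (R := R) (w t α)).choose_spec
  exact (core_indep f W x hd w hw v hv).cardinal_le_rank

end Core

section Continuum

variable (f : (∀ i, A i) →ₙₐ[R] B) [Infinite (IsLocalRing.ResidueField R)]
  (W : ULift.{u} ℕ → Set I) (x : ∀ i, A i)

lemma rank_ge_continuum (hd : Pairwise (onFun Disjoint W))
    (hsurj : Function.Surjective f)
    (hcof : ∀ hb ∈ WSet f W x, {β | hb β = 0}.Finite → False)
    (hk : #(IsLocalRing.ResidueField R) < 2 ^ Cardinal.aleph0.{u}) :
    2 ^ Cardinal.aleph0.{u} ≤ Module.rank R B := by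
  classical
  set K := IsLocalRing.ResidueField R
  set WS : Submodule K (ULift.{u} ℕ → K) :=
    { carrier := WSet f W x
      add_mem' := fun h1 h2 => WSet_add f W x h1 h2
      zero_mem' := WSet_zero_mem f W x
      smul_mem' := fun c h hm => WSet_smul f W x hd hsurj hm c } with hWSdef
  set Q := (ULift.{u} ℕ → K) ⧸ WS with hQdef
  set emb : ℕ ↪ K := Infinite.natEmbedding K with hembdef
  set gv : (ULift.{u} ℕ → ULift.{u} Bool) → ULift.{u} ℕ → K := fun σ n =>
    emb (Encodable.encode ((List.range n.down).map fun m => (σ ⟨m⟩).down)) with hgvdef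
  -- injectivity of σ ↦ mk (gv σ)
  have hginj : Function.Injective fun σ => Submodule.Quotient.mk (p := WS) (gv σ) := by
    intro σ τ hστ
    by_contra hne
    have : ∃ n0 : ℕ, (σ ⟨n0⟩).down ≠ (τ ⟨n0⟩).down := by
      by_contra hall
      push_neg at hall
      exact hne (funext fun n => ULift.ext _ _ (hall n.down))
    obtain ⟨n0, hn0⟩ := this
    have hdm : gv σ - gv τ ∈ WSet f W x := by
      have := (Submodule.Quotient.eq WS).mp hστ
      exact this
    refine hcof _ hdm ?_
    have hsub : {β : ULift.{u} ℕ | (gv σ - gv τ) β = 0} ⊆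
        {β : ULift.{u} ℕ | β.down ≤ n0} := by
      intro n hn
      simp only [Set.mem_setOf_eq, Pi.sub_apply, sub_eq_zero] at hn
      by_contra hgt
      simp only [Set.mem_setOf_eq, not_le] at hgt
      have hlist : ((List.range n.down).map fun m => (σ ⟨m⟩).down) ≠
          ((List.range n.down).map fun m => (τ ⟨m⟩).down) := by
        intro he
        have h1 := congrArg (fun l => l[(n0 : ℕ)]?) he
        simp only [List.getElem?_map, List.getElem?_range hgt, Option.map_some] at h1
        exact hn0 (Option.some.inj h1)
      exact hlist (Encodable.encode_injective (emb.injective hn))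
    exact (Set.Finite.preimage (f := ULift.down)
      (Function.Injective.injOn ULift.down_injective) (Set.finite_Iic n0)).subset hsub
  have hcard : 2 ^ Cardinal.aleph0.{u} ≤ #Q := by
    have h1 := Cardinal.mk_le_of_injective hginj
    refine le_trans (le_of_eq ?_) h1
    rw [← Cardinal.power_def]
    simp [Cardinal.mk_uLift, Cardinal.mk_bool, Cardinal.mk_nat]
  -- rank of Q over K is at least continuum
  have hrankQ : 2 ^ Cardinal.aleph0.{u} ≤ Module.rank K Q := by
    by_contra hlt
    push_neg at hlt
    set bQ := Module.Basis.ofVectorSpace K Q with hbQdef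
    have hQeq : #Q = #(Module.Basis.ofVectorSpaceIndex K Q →₀ K) := Cardinal.mk_congr bQ.repr.toEquiv
    have hι : #(Module.Basis.ofVectorSpaceIndex K Q) = Module.rank K Q := bQ.mk_eq_rank''
    by_cases hfin : Finite (Module.Basis.ofVectorSpaceIndex K Q)
    · have : #Q < 2 ^ Cardinal.aleph0.{u} := by
        rw [hQeq]
        haveI : Fintype (Module.Basis.ofVectorSpaceIndex K Q) := Fintype.ofFinite _
        rw [Cardinal.mk_finsupp_of_fintype]
        calc #K ^ Fintype.card (Module.Basis.ofVectorSpaceIndex K Q) ≤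
            #K ^ (Fintype.card (Module.Basis.ofVectorSpaceIndex K Q) + 1 : ℕ) := by
              refine Cardinal.power_le_power_left ?_ ?_
              · exact Cardinal.mk_ne_zero K
              · exact_mod_cast Nat.le_succ _
          _ = #K := Cardinal.power_nat_eq (Cardinal.infinite_iff.mp inferInstance) (Nat.succ_le_succ (Nat.zero_le _))
          _ < 2 ^ Cardinal.aleph0.{u} := hk
      exact absurd hcard (not_le.mpr (lt_of_le_of_lt (le_of_eq rfl) this)) -- fix
    · haveI : Infinite (Module.Basis.ofVectorSpaceIndex K Q) := not_finite_iff_infinite.mp hfin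
      have : #Q < 2 ^ Cardinal.aleph0.{u} := by
        rw [hQeq, Cardinal.mk_finsupp_of_infinite]
        exact max_lt (hι ▸ hlt) hk
      exact absurd hcard (not_le.mpr this)
  -- transfer: rank over K of Q ≤ rank over R of B
  refine le_trans hrankQ ?_
  rw [Module.rank_def]
  refine ciSup_le' ?_
  rintro ⟨s, hs⟩
  choose vq hvq using fun t : s => Submodule.Quotient.mk_surjective WS (t : Q)
  have hw : ∀ (F : Finset s) (c : s → K) (t1 : s), t1 ∈ F → c t1 ≠ 0 →
      (fun α => ∑ t ∈ F, c t * vq t α) ∉ WSet f W x := by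
    intro F c t1 ht1 hc hmem
    have hcombo : (fun α => ∑ t ∈ F, c t * vq t α) = ∑ t ∈ F, c t • vq t := by
      funext α
      rw [Finset.sum_apply]
      exact Finset.sum_congr rfl fun t _ => rfl
    have hmk0 : (fun α => ∑ t ∈ F, c t * vq t α) ∈ WS := hmem
    rw [hcombo] at hmk0
    have hmk : Submodule.Quotient.mk (p := WS) (∑ t ∈ F, c t • vq t) = 0 :=
      (Submodule.Quotient.mk_eq_zero WS).mpr hmk0
    have : (∑ t ∈ F, c t • (t : Q)) = 0 := by
      rw [← hmk, ← WS.mkQ_apply, map_sum]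
      refine Finset.sum_congr rfl fun t _ => ?_
      rw [map_smul, WS.mkQ_apply, hvq]
    exact hc (linearIndependent_iff'.mp hs F c this t1 ht1)
  set v : s → ULift.{u} ℕ → R :=
    fun t α => (IsLocalRing.residue_surjective (R := R) (vq t α)).choose with hvdef
  have hv : ∀ t, rFun (v t) = vq t := fun t => funext fun α =>
    (IsLocalRing.residue_surjective (R := R) (vq t α)).choose_spec
  exact (core_indep f W x hd vq hw v hv).cardinal_le_rank

end Continuum

section Unions

variable (f : (∀ i, A i) →ₙₐ[R] B) [Infinite (IsLocalRing.ResidueField R)]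

lemma disjointify {Λ : Type u} (W : Λ → Set I) :
    ∃ W' : Λ → Set I, (∀ β, W' β ⊆ W β) ∧ Pairwise (onFun Disjoint W') ∧
      (⋃ β, W' β) = ⋃ β, W β := by
  classical
  set W' : Λ → Set I := fun β => W β \ ⋃ γ ∈ {γ | WellOrderingRel γ β}, W γ with hW'def
  refine ⟨W', fun β => Set.diff_subset, ?_, ?_⟩
  · intro β γ hne
    have htri := trichotomous_of (WellOrderingRel (α := Λ)) β γ
    have key : ∀ β' γ' : Λ, WellOrderingRel β' γ' → Disjoint (W' β') (W' γ') := by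
      intro β' γ' hr
      rw [Set.disjoint_left]
      intro i hiβ hiγ
      exact hiγ.2 (Set.mem_biUnion hr hiβ.1)
    rcases htri with h | h | h
    · exact key _ _ h
    · exact absurd h hne
    · exact (key _ _ h).symm
  · apply Set.Subset.antisymm
    · exact Set.iUnion_mono fun β => Set.diff_subset
    · intro i hi
      obtain ⟨β, hβ⟩ := Set.mem_iUnion.mp hi
      have hne : {γ | i ∈ W γ}.Nonempty := ⟨β, hβ⟩
      have hwf := (WellOrderingRel.isWellOrder (α := Λ)).toIsWellFounded.wf
      set γ0 := hwf.min _ hne with hγ0def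
      refine Set.mem_iUnion.mpr ⟨γ0, hwf.min_mem _ hne, ?_⟩
      intro hmem
      simp only [Set.mem_iUnion, Set.mem_setOf_eq] at hmem
      obtain ⟨γ, hγr, hiγ⟩ := hmem
      exact hwf.not_lt_min _ hiγ hγr

lemma exists_disjoint_embs {Λ : Type u}
    (hΛ : #Λ ≤ #(IsLocalRing.ResidueField R)) :
    ∃ (a : Λ ↪ IsLocalRing.ResidueField R)
      (b : IsLocalRing.ResidueField R ↪ IsLocalRing.ResidueField R),
      ∀ t α, b t ≠ a α := by
  set K := IsLocalRing.ResidueField R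
  have hKK : #(K ⊕ K) = #K := by
    simp only [Cardinal.mk_sum, Cardinal.lift_id]
    exact Cardinal.add_eq_self (Cardinal.infinite_iff.mp inferInstance)
  obtain ⟨e⟩ := Cardinal.eq.mp hKK
  obtain ⟨emb⟩ := (Cardinal.le_def _ _).mp hΛ
  refine ⟨(emb.trans (Function.Embedding.inl (β := K))).trans e.toEmbedding,
    (Function.Embedding.inr (α := K)).trans e.toEmbedding, ?_⟩
  intro t α h
  simp only [Function.Embedding.trans_apply, Equiv.coe_toEmbedding] at h
  exact absurd (e.injective h) (by simp)

lemma union_J_small (hsurj : Function.Surjective f)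
    (hrk : Module.rank R B < #(IsLocalRing.ResidueField R))
    {Λ : Type u} (hΛ : #Λ ≤ #(IsLocalRing.ResidueField R)) (W : Λ → Set I)
    (hWJ : ∀ β, W β ∈ JSet f) : (⋃ β, W β) ∈ JSet f := by
  obtain ⟨W', hsub, hd, hcover⟩ := disjointify W
  rw [← hcover]
  by_contra hnot
  simp only [JSet, Set.mem_setOf_eq] at hnot
  push_neg at hnot
  obtain ⟨x, hx, hfx⟩ := hnot
  have hx' : ∀ i, (¬∃ β, i ∈ W' β) → x i = 0 := fun i hi =>
    hx i (by simpa using hi)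
  obtain ⟨a, b, hab⟩ := exists_disjoint_embs hΛ
  have hcof := WSet_cof f W' x hd hsurj (fun β => JSet_mono f (hsub β) (hWJ β)) hx' hfx
  exact absurd (rank_ge_cauchy f W' x hd a b hab hcof) (not_le.mpr hrk)

lemma union_J_count (hsurj : Function.Surjective f)
    (hrk : Module.rank R B < 2 ^ Cardinal.aleph0.{u})
    (W : ULift.{u} ℕ → Set I) (hWJ : ∀ β, W β ∈ JSet f) : (⋃ β, W β) ∈ JSet f := by
  have hℕ : #(ULift.{u} ℕ) ≤ #(IsLocalRing.ResidueField R) := by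
    rw [Cardinal.mk_uLift, Cardinal.mk_nat, Cardinal.lift_aleph0]
    exact Cardinal.infinite_iff.mp inferInstance
  rcases lt_or_ge (Module.rank R B) #(IsLocalRing.ResidueField R) with h | h
  · exact union_J_small f hsurj h hℕ W hWJ
  · obtain ⟨W', hsub, hd, hcover⟩ := disjointify W
    rw [← hcover]
    by_contra hnot
    simp only [JSet, Set.mem_setOf_eq] at hnot
    push_neg at hnot
    obtain ⟨x, hx, hfx⟩ := hnot
    have hx' : ∀ i, (¬∃ β, i ∈ W' β) → x i = 0 := fun i hi =>
      hx i (by simpa using hi)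
    have hcof := WSet_cof f W' x hd hsurj (fun β => JSet_mono f (hsub β) (hWJ β)) hx' hfx
    exact absurd (rank_ge_continuum f W' x hd hsurj hcof (lt_of_le_of_lt h hrk))
      (not_le.mpr hrk)

lemma no_disjoint_posfamily (hsurj : Function.Surjective f)
    (hrk : Module.rank R B < #(IsLocalRing.ResidueField R) ∨
      Module.rank R B < 2 ^ Cardinal.aleph0.{u})
    (T : ULift.{u} ℕ → Set I) (hd : Pairwise (onFun Disjoint T))
    (hpos : ∀ n, T n ∉ JSet f) : False := by
  classical
  have hw : ∀ n, ∃ xw : ∀ i, A i, (∀ i ∉ T n, xw i = 0) ∧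
      f xw ∉ totalAnnihilator R B := by
    intro n
    have := hpos n
    simp only [JSet, Set.mem_setOf_eq] at this
    push_neg at this
    exact this
  choose xw hxw1 hxw2 using hw
  set x : ∀ i, A i := fun i => if hc : ∃ n, i ∈ T n then xw hc.choose i else 0 with hxdef
  have hdelta : ∀ (n) (d : ULift.{u} ℕ → R), (∀ γ, γ ≠ n → d γ = 0) →
      sFun T d x = d n • xw n := by
    intro n d hdsupp
    funext i
    by_cases hc : ∃ m, i ∈ T m
    · obtain ⟨m, hm⟩ := hc
      rw [sFun_spec T hd _ _ hm]
      by_cases hmn : m = n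
      · subst hmn
        have hxi : x i = xw m i := by
          rw [hxdef]
          show (if hc' : ∃ k, i ∈ T k then xw hc'.choose i else 0) = xw m i
          rw [dif_pos ⟨m, hm⟩]
          rw [block_unique T hd (Exists.choose_spec (⟨m, hm⟩ : ∃ k, i ∈ T k)) hm]
        rw [hxi]
        rfl
      · rw [hdsupp m hmn, zero_smul, Pi.smul_apply]
        rw [hxw1 n i fun hin => hmn (block_unique T hd hm hin), smul_zero]
    · rw [sFun_not T _ _ hc, Pi.smul_apply,
        hxw1 n i fun hin => hc ⟨n, hin⟩, smul_zero]
  have hδ : ∀ n : ULift.{u} ℕ, ∀ d : ULift.{u} ℕ → R, (∀ γ, γ ≠ n → d γ = 0) →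
      IsUnit (d n) → d ∉ ZSub f T x := by
    intro n d hdsupp hdu hmem
    have hmem' : f (sFun T d x) ∈ totalAnnihilator R B := hmem
    rw [hdelta n d hdsupp] at hmem'
    rw [map_smul] at hmem'
    exact hxw2 n (tA_sat hdu.ne_zero hmem')
  have hcof := WSet_cof0 f T x hd hsurj hδ
  have hℕ : #(ULift.{u} ℕ) ≤ #(IsLocalRing.ResidueField R) := by
    rw [Cardinal.mk_uLift, Cardinal.mk_nat, Cardinal.lift_aleph0]
    exact Cardinal.infinite_iff.mp inferInstance
  rcases hrk with h | h
  · obtain ⟨a, b, hab⟩ := exists_disjoint_embs hℕ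
    exact absurd (rank_ge_cauchy f T x hd a b hab hcof) (not_le.mpr h)
  · rcases lt_or_ge (Module.rank R B) #(IsLocalRing.ResidueField R) with h2 | h2
    · obtain ⟨a, b, hab⟩ := exists_disjoint_embs hℕ
      exact absurd (rank_ge_cauchy f T x hd a b hab hcof) (not_le.mpr h2)
    · exact absurd (rank_ge_continuum f T x hd hsurj hcof (lt_of_le_of_lt h2 h))
        (not_le.mpr h)

end Unions

section Struct

variable (f : (∀ i, A i) →ₙₐ[R] B)

/-- An atom modulo the null ideal. -/
def JAtom (P : Set I) : Prop :=
  P ∉ JSet f ∧ ∀ T : Set I, (P ∩ T ∈ JSet f) ∨ (P \ T ∈ JSet f)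

lemma exists_atom
    (hnofam : ¬∃ T : ULift.{u} ℕ → Set I,
      Pairwise (onFun Disjoint T) ∧ ∀ n, T n ∉ JSet f)
    {S : Set I} (hS : S ∉ JSet f) : ∃ P, P ⊆ S ∧ JAtom f P := by
  classical
  by_contra hnot
  push_neg at hnot
  have hstep : ∀ C : Set I, C ⊆ S → C ∉ JSet f →
      ∃ D E : Set I, D ⊆ C ∧ E ⊆ C ∧ Disjoint D E ∧ D ∉ JSet f ∧ E ∉ JSet f := by
    intro C hCS hCJ
    have := hnot C hCS
    rw [JAtom] at this
    push_neg at this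
    obtain ⟨T, hT1, hT2⟩ := this hCJ
    refine ⟨C ∩ T, C \ T, Set.inter_subset_left, Set.diff_subset, ?_, hT1, hT2⟩
    rw [Set.disjoint_left]
    rintro i ⟨_, hiT⟩ ⟨_, hniT⟩
    exact hniT hiT
  have hstep' : ∀ C : {C : Set I // C ⊆ S ∧ C ∉ JSet f},
      ∃ p : {C : Set I // C ⊆ S ∧ C ∉ JSet f} × Set I,
        p.1.1 ⊆ C.1 ∧ p.2 ⊆ C.1 ∧ Disjoint p.1.1 p.2 ∧ p.2 ∉ JSet f := by
    intro C
    obtain ⟨D, E, hD, hE, hdis, hDJ, hEJ⟩ := hstep C.1 C.2.1 C.2.2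
    exact ⟨(⟨D, hD.trans C.2.1, hDJ⟩, E), hD, hE, hdis, hEJ⟩
  choose g hg1 hg2 hg3 hg4 using hstep'
  set σ : ℕ → {C : Set I // C ⊆ S ∧ C ∉ JSet f} :=
    fun n => Nat.rec ⟨S, subset_rfl, hS⟩ (fun _ prev => (g prev).1) n with hσdef
  have hdec : ∀ n, (σ (n+1)).1 ⊆ (σ n).1 := fun n => hg1 (σ n)
  have hmono : ∀ {n m : ℕ}, n ≤ m → (σ m).1 ⊆ (σ n).1 := by
    intro n m h
    induction h with
    | refl => exact subset_rfl
    | step h ih => exact (hdec _).trans ih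
  set Dfam : ℕ → Set I := fun n => (g (σ n)).2 with hDdef
  have key : ∀ a b : ℕ, a < b → Disjoint (Dfam a) (Dfam b) := by
    intro a b hab
    have h1 : Dfam b ⊆ (σ (a+1)).1 := (hg2 (σ b)).trans (hmono hab)
    exact (Disjoint.mono_left h1 (hg3 (σ a))).symm
  refine hnofam ⟨fun n => Dfam n.down, ?_, fun n => hg4 (σ n.down)⟩
  intro n m hne
  have hdne : n.down ≠ m.down := fun h => hne (ULift.ext _ _ h)
  rcases lt_trichotomy n.down m.down with h | h | h
  · exact key _ _ h
  · exact absurd h hdne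
  · exact (key _ _ h).symm

lemma exists_atomic_decomposition
    (hnofam : ¬∃ T : ULift.{u} ℕ → Set I,
      Pairwise (onFun Disjoint T) ∧ ∀ n, T n ∉ JSet f) :
    ∃ (n : ℕ) (P : Fin n → Set I), (∀ m, JAtom f (P m)) ∧
      Pairwise (onFun Disjoint P) ∧ (Set.univ \ ⋃ m, P m) ∈ JSet f := by
  classical
  set 𝒜 : Set (Set (Set I)) :=
    {M | (∀ P ∈ M, JAtom f P) ∧ M.Pairwise Disjoint} with h𝒜def
  obtain ⟨M, hM⟩ := zorn_subset 𝒜 (by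
    intro c hc hchain
    refine ⟨⋃₀ c, ⟨?_, ?_⟩, fun s hs => Set.subset_sUnion_of_mem hs⟩
    · rintro P ⟨s, hs, hPs⟩
      exact (hc hs).1 P hPs
    · rintro P ⟨s, hs, hPs⟩ Q ⟨t, ht, hQt⟩ hPQ
      rcases hchain.total hs ht with h | h
      · exact (hc ht).2 (h hPs) hQt hPQ
      · exact (hc hs).2 hPs (h hQt) hPQ)
  have hMatom : ∀ P ∈ M, JAtom f P := hM.prop.1
  have hMpair : M.Pairwise Disjoint := hM.prop.2
  have hMfin : M.Finite := by
    by_contra hinf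
    have e := Set.Infinite.natEmbedding M hinf
    refine hnofam ⟨fun n => (e n.down : Set I), ?_, fun n => (hMatom _ (e n.down).2).1⟩
    intro n m hne
    have : (e n.down : Set I) ≠ (e m.down : Set I) := by
      intro h
      exact hne (ULift.ext _ _ (by
        have := e.injective (Subtype.ext h)
        exact this))
    exact hMpair (e n.down).2 (e m.down).2 this
  have hcomp : (Set.univ \ ⋃₀ M) ∈ JSet f := by
    by_contra hcJ
    obtain ⟨P0, hP0sub, hP0⟩ := exists_atom f hnofam hcJ
    have hP0ne : P0 ∉ M := by
      intro hmem
      refine hP0.1 (JSet_mono f ?_ (JSet_empty f))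
      intro i hi
      exact (hP0sub hi).2 ⟨P0, hmem, hi⟩
    have hM' : insert P0 M ∈ 𝒜 := by
      constructor
      · rintro P (rfl | hP)
        · exact hP0
        · exact hMatom P hP
      · intro P hP Q hQ hPQ
        rcases hP with rfl | hP <;> rcases hQ with rfl | hQ
        · exact absurd rfl hPQ
        · rw [Set.disjoint_left]
          intro i hiP hiQ
          exact (hP0sub hiP).2 ⟨Q, hQ, hiQ⟩
        · rw [Set.disjoint_right]
          intro i hiP hiQ
          exact (hP0sub hiP).2 ⟨P, hP, hiQ⟩
        · exact hMpair hP hQ hPQ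
    have := hM.eq_of_subset hM' (Set.subset_insert _ _)
    exact hP0ne (this ▸ Set.mem_insert _ _)
  haveI := hMfin.fintype
  obtain ⟨n, e⟩ : ∃ n : ℕ, Nonempty (M ≃ Fin n) := ⟨Fintype.card M, ⟨Fintype.equivFin M⟩⟩
  obtain ⟨e⟩ := e
  refine ⟨n, fun m => (e.symm m : Set I), fun m => hMatom _ (e.symm m).2, ?_, ?_⟩
  · intro m m' hne
    refine hMpair (e.symm m).2 (e.symm m').2 ?_
    intro h
    exact hne (e.symm.injective (Subtype.ext h))
  · refine JSet_mono f ?_ hcomp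
    intro i hi
    refine ⟨hi.1, ?_⟩
    intro ⟨s, hs, his⟩
    exact hi.2 (Set.mem_iUnion.mpr ⟨e ⟨s, hs⟩, by simpa using his⟩)

/-- The ultrafilter attached to an atom. -/
noncomputable def atomUF {P : Set I} (hP : JAtom f P) : Ultrafilter I :=
  Ultrafilter.ofComplNotMemIff
    { sets := {S | P \ S ∈ JSet f}
      univ_sets := by
        show P \ Set.univ ∈ JSet f
        rw [Set.diff_univ]
        exact JSet_empty f
      sets_of_superset := by
        intro S T hS hsub
        exact JSet_mono f (Set.diff_subset_diff_right hsub) hS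
      inter_sets := by
        intro S T hS hT
        refine JSet_mono f ?_ (JSet_union f hS hT)
        intro i hi
        by_cases h : i ∈ S
        · exact Or.inr ⟨hi.1, fun hT' => hi.2 ⟨h, hT'⟩⟩
        · exact Or.inl ⟨hi.1, h⟩ }
    (by
      intro S
      constructor
      · intro h
        rcases hP.2 S with hin | hout
        · exfalso
          refine h ?_
          show P \ Sᶜ ∈ JSet f
          rw [Set.diff_compl]
          exact hin
        · exact hout
      · intro hS hSc
        refine hP.1 (JSet_mono f ?_ (JSet_union f hS hSc))
        intro i hi
        by_cases h : i ∈ S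
        · exact Or.inr ⟨hi, fun h' => h' h⟩
        · exact Or.inl ⟨hi, h⟩)

lemma mem_atomUF {P : Set I} (hP : JAtom f P) {S : Set I} :
    S ∈ (atomUF f hP : Filter I) ↔ P \ S ∈ JSet f := Iff.rfl

end Struct

section Complete

variable (f : (∀ i, A i) →ₙₐ[R] B) [Infinite (IsLocalRing.ResidueField R)]

lemma atomUF_kappa (hsurj : Function.Surjective f)
    (hrk : Module.rank R B < #(IsLocalRing.ResidueField R))
    {P : Set I} (hP : JAtom f P) :
    KappaComplete (Order.succ #(IsLocalRing.ResidueField R))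
      (atomUF f hP : Filter I) := by
  intro 𝒮 h𝒮 hmem
  rw [mem_atomUF]
  have hΛ : #↥𝒮 ≤ #(IsLocalRing.ResidueField R) := Order.lt_succ_iff.mp h𝒮
  have hunion := union_J_small f hsurj hrk hΛ (fun s : ↥𝒮 => P \ (s : Set I))
    (fun s => hmem s s.2)
  refine JSet_mono f ?_ hunion
  intro i hi
  have : ¬∀ t ∈ 𝒮, i ∈ t := fun h => hi.2 (Set.mem_sInter.mpr h)
  push_neg at this
  obtain ⟨t, ht, hit⟩ := this
  exact Set.mem_iUnion.mpr ⟨⟨t, ht⟩, hi.1, hit⟩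

lemma atomUF_count (hsurj : Function.Surjective f)
    (hrk : Module.rank R B < 2 ^ Cardinal.aleph0.{u})
    {P : Set I} (hP : JAtom f P) :
    CountablyComplete (atomUF f hP : Filter I) := by
  intro s hs
  rw [mem_atomUF]
  have hunion := union_J_count f hsurj hrk (fun n : ULift.{u} ℕ => P \ s n.down)
    (fun n => hs n.down)
  refine JSet_mono f ?_ hunion
  intro i hi
  have : ¬∀ n, i ∈ s n := fun h => hi.2 (Set.mem_iInter.mpr h)
  push_neg at this
  obtain ⟨n, hn⟩ := this
  exact Set.mem_iUnion.mpr ⟨⟨n⟩, hi.1, hn⟩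

end Complete

section Main

variable (f : (∀ i, A i) →ₙₐ[R] B) [Infinite (IsLocalRing.ResidueField R)]

lemma main_package (hsurj : Function.Surjective f)
    (hrkd : Module.rank R B < #(IsLocalRing.ResidueField R) ∨
      Module.rank R B < 2 ^ Cardinal.aleph0.{u}) :
    ∃ (n : ℕ) (P : Fin n → Set I) (hatom : ∀ m, JAtom f (P m)),
      ∀ a b : ∀ i, A i,
        (∀ m : Fin n, {i | a i = b i} ∈ (atomUF f (hatom m) : Filter I)) →
        Submodule.Quotient.mk (p := totalAnnihilator R B) (f a) =
          Submodule.Quotient.mk (p := totalAnnihilator R B) (f b) := by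
  classical
  have hnofam : ¬∃ T : ULift.{u} ℕ → Set I,
      Pairwise (onFun Disjoint T) ∧ ∀ n, T n ∉ JSet f := by
    rintro ⟨T, hd, hpos⟩
    exact no_disjoint_posfamily f hsurj hrkd T hd hpos
  obtain ⟨n, P, hatom, hdisj, hcomp⟩ := exists_atomic_decomposition f hnofam
  refine ⟨n, P, hatom, ?_⟩
  intro a b hm
  rw [Submodule.Quotient.eq]
  have hSc : {i | a i = b i}ᶜ ∈ JSet f := by
    have hsub : {i | a i = b i}ᶜ ⊆
        (Set.univ \ ⋃ m, P m) ∪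
          ⋃ m ∈ (Finset.univ : Finset (Fin n)), (P m \ {i | a i = b i}) := by
      intro i hi
      by_cases h : ∃ m, i ∈ P m
      · obtain ⟨m, hm'⟩ := h
        exact Or.inr (Set.mem_biUnion (Finset.mem_univ m) ⟨hm', hi⟩)
      · exact Or.inl ⟨trivial, fun hmem => h (Set.mem_iUnion.mp hmem)⟩
    exact JSet_mono f hsub (JSet_union f hcomp
      (JSet_finsetUnion f _ _ fun m _ => (mem_atomUF f (hatom m)).mp (hm m)))
  have hsupp : ∀ i ∉ {i | a i = b i}ᶜ, (a - b) i = 0 := by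
    intro i hi
    simp only [Set.mem_compl_iff, Set.mem_setOf_eq, not_not] at hi
    simp [hi]
  have hz := hSc (a - b) hsupp
  rwa [map_sub] at hz

end Main

end BN

/-- Let `R` be a commutative valuation ring with infinite
residue field `k`, `B` a (nonunital, nonassociative) `R`-algebra which is
torsion-free as an `R`-module, and `f : A = ∏ᵢ Aᵢ → B` a surjective
`R`-algebra homomorphism.  If `rk_R B < card k` (case (i)) or
`rk_R B < 2 ^ ℵ₀` (case (ii)), then the composite `A → B → B/Z(B)` factors
through the natural map `A → A/U 0 × … × A/U (n-1)`, where the ultrafilters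
`U m` on `I` are `card(k)⁺`-complete in case (i) and countably complete in
case (ii). -/
theorem composite_factors_valuation_ring
    (R : Type u) [CommRing R] [IsDomain R] [ValuationRing R]
    [Infinite (IsLocalRing.ResidueField R)]
    {I : Type u} (A : I → Type u)
    [∀ i, NonUnitalNonAssocRing (A i)] [∀ i, Module R (A i)]
    [∀ i, SMulCommClass R (A i) (A i)] [∀ i, IsScalarTower R (A i) (A i)]
    (B : Type u) [NonUnitalNonAssocRing B] [Module R B] [SMulCommClass R B B]
    [IsScalarTower R B B] [NoZeroSMulDivisors R B]
    (f : (∀ i, A i) →ₙₐ[R] B) (hf : Function.Surjective f) :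
    (Module.rank R B < Cardinal.mk (IsLocalRing.ResidueField R) →
      ∃ (n : ℕ) (U : Fin n → Ultrafilter I),
        (∀ m, KappaComplete
          (Order.succ (Cardinal.mk (IsLocalRing.ResidueField R)))
          (U m : Filter I)) ∧
        ∃ g : (∀ m, ReducedProduct (U m : Filter I) A) →
            B ⧸ totalAnnihilator R B,
          (fun a => Submodule.Quotient.mk (f a) :
              (∀ i, A i) → B ⧸ totalAnnihilator R B)
            = g ∘ fun (a : ∀ i, A i) (m : Fin n) =>
                reducedMk (U m : Filter I) A a) ∧
    (Module.rank R B < 2 ^ Cardinal.aleph0 →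
      ∃ (n : ℕ) (U : Fin n → Ultrafilter I),
        (∀ m, CountablyComplete (U m : Filter I)) ∧
        ∃ g : (∀ m, ReducedProduct (U m : Filter I) A) →
            B ⧸ totalAnnihilator R B,
          (fun a => Submodule.Quotient.mk (f a) :
              (∀ i, A i) → B ⧸ totalAnnihilator R B)
            = g ∘ fun (a : ∀ i, A i) (m : Fin n) =>
                reducedMk (U m : Filter I) A a) := by
  classical
  constructor
  · intro hrk
    obtain ⟨n, P, hatom, hfact⟩ := main_package f hf (Or.inl hrk)
    refine ⟨n, fun m => atomUF f (hatom m),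
      fun m => atomUF_kappa f hf hrk (hatom m), ?_⟩
    refine ⟨fun φ => if hφ : ∃ a, (fun m => reducedMk
        ((atomUF f (hatom m)) : Filter I) A a) = φ
      then Submodule.Quotient.mk (f hφ.choose) else 0, ?_⟩
    funext a
    have hex : ∃ a', (fun m => reducedMk ((atomUF f (hatom m)) : Filter I) A a') =
        (fun m => reducedMk ((atomUF f (hatom m)) : Filter I) A a) := ⟨a, rfl⟩
    show Submodule.Quotient.mk (f a) = _
    rw [Function.comp_apply, dif_pos hex]
    refine (hfact hex.choose a fun m => ?_).symm
    exact Quotient.exact (congrFun hex.choose_spec m)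
  · intro hrk
    obtain ⟨n, P, hatom, hfact⟩ := main_package f hf (Or.inr hrk)
    refine ⟨n, fun m => atomUF f (hatom m),
      fun m => atomUF_count f hf hrk (hatom m), ?_⟩
    refine ⟨fun φ => if hφ : ∃ a, (fun m => reducedMk
        ((atomUF f (hatom m)) : Filter I) A a) = φ
      then Submodule.Quotient.mk (f hφ.choose) else 0, ?_⟩
    funext a
    have hex : ∃ a', (fun m => reducedMk ((atomUF f (hatom m)) : Filter I) A a') =
        (fun m => reducedMk ((atomUF f (hatom m)) : Filter I) A a) := ⟨a, rfl⟩
    show Submodule.Quotient.mk (f a) = _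
    rw [Function.comp_apply, dif_pos hex]
    refine (hfact hex.choose a fun m => ?_).symm
    exact Quotient.exact (congrFun hex.choose_spec m)
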